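/- Let f: {0,1}^10 → {0,1} be a Boolean function with d(f) ≤ 4 such that f(0^10) = 0 and f(e_i) = 1 for every standard basis vector e_i ∈ {0,1}^10. Then for every integer w with 0 ≤ w ≤ 10, the number of inputs x ∈ {0,1}^10 of Hamming weight w with f(x) = 1 equals C(10,w)·q(w), where q(x) = −x^4/144 + 5x^3/36 − 125x^2/144 + 125x/72 and C(10,w) is the binomial coefficient. In other words, the only univariate polynomial achievable as the symmetrization of such a function is q. -/

import Mathlib

noncomputable section

/-- Interpret a Boolean value as a real number (true ↦ 1, false ↦ 0). -/
def boolToReal (b : Bool) : ℝ := if b then 1 else 0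

/-- `P` is the (unique) multilinear real polynomial representing the Boolean function `f`
on `{0,1}^n`. -/
def IsRepr {n : ℕ} (f : (Fin n → Bool) → Bool) (P : MvPolynomial (Fin n) ℝ) : Prop :=
  (∀ i, P.degreeOf i ≤ 1) ∧
  ∀ x : Fin n → Bool, MvPolynomial.eval (fun i => boolToReal (x i)) P = boolToReal (f x)

/-- The degree `d(f)` of a Boolean function: the degree of its (unique) multilinear
representing polynomial. -/
def bdeg {n : ℕ} (f : (Fin n → Bool) → Bool) : ℕ :=
  sInf {d | ∃ P : MvPolynomial (Fin n) ℝ, IsRepr f P ∧ P.totalDegree = d}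

/-- The conjectured extremal symmetrization polynomial
`q(x) = −x⁴/144 + 5x³/36 − 125x²/144 + 125x/72`. -/
def qPoly (x : ℝ) : ℝ :=
  -(x ^ 4) / 144 + 5 * x ^ 3 / 36 - 125 * x ^ 2 / 144 + 125 * x / 72

open Finset MvPolynomial

/-- Every Boolean function has a multilinear representing polynomial. -/
lemma exists_repr {n : ℕ} (f : (Fin n → Bool) → Bool) : ∃ P, IsRepr f P := by
  classical
  refine ⟨∑ y : Fin n → Bool, MvPolynomial.C (boolToReal (f y)) *
    ∏ i, (if y i then MvPolynomial.X i else 1 - MvPolynomial.X i), ?_, ?_⟩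
  · intro i
    refine le_trans (degreeOf_sum_le _ _ _) (Finset.sup_le fun y _ => ?_)
    refine le_trans (degreeOf_mul_le _ _ _) ?_
    rw [degreeOf_C, zero_add]
    refine le_trans (degreeOf_prod_le _ _ _) ?_
    have hfac : ∀ j : Fin n,
        degreeOf i (if y j then (X j : MvPolynomial (Fin n) ℝ) else 1 - X j)
          ≤ if i = j then 1 else 0 := by
      intro j
      by_cases hj : y j <;> simp only [hj, if_true, if_false]
      · rw [degreeOf_X]
      · refine le_trans (degreeOf_sub_le _ _ _) ?_
        have h1 : degreeOf i (1 : MvPolynomial (Fin n) ℝ) = 0 := by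
          simpa using degreeOf_C (1 : ℝ) i
        rw [h1, degreeOf_X]
        simp
    refine le_trans (Finset.sum_le_sum fun j _ => hfac j) ?_
    simp
  · intro x
    rw [map_sum]
    have hterm : ∀ y : Fin n → Bool,
        MvPolynomial.eval (fun i => boolToReal (x i))
          (MvPolynomial.C (boolToReal (f y)) *
            ∏ i, (if y i then MvPolynomial.X i else 1 - MvPolynomial.X i))
        = boolToReal (f y) * (if y = x then 1 else 0) := by
      intro y
      rw [map_mul, eval_C, map_prod]
      congr 1
      by_cases hyx : y = x
      · subst hyx
        rw [if_pos rfl]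
        refine Finset.prod_eq_one fun i _ => ?_
        by_cases h : y i <;> simp [h, boolToReal]
      · rw [if_neg hyx]
        obtain ⟨i, hi⟩ : ∃ i, y i ≠ x i := by
          by_contra h
          push_neg at h
          exact hyx (funext h)
        refine Finset.prod_eq_zero (Finset.mem_univ i) ?_
        by_cases h : y i
        · have hx : x i = false := by
            cases hxv : x i <;> simp_all
          simp [h, hx, boolToReal]
        · have hx : x i = true := by
            cases hxv : x i <;> simp_all
          simp [h, hx, boolToReal]
    simp only [hterm]
    rw [Finset.sum_eq_single x]
    · simp
    · intro y _ hy; simp [hy]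
    · intro h; exact absurd (Finset.mem_univ x) h

/-- Counting inputs of weight `w` whose support contains a given set `s`. -/
lemma count_weight_supset (n w : ℕ) (s : Finset (Fin n)) :
    (Finset.univ.filter fun x : Fin n → Bool =>
      (Finset.univ.filter fun i => x i = true).card = w ∧
        s ⊆ Finset.univ.filter fun i => x i = true).card
    = if s.card ≤ w then (n - s.card).choose (w - s.card) else 0 := by
  classical
  by_cases hsw : s.card ≤ w
  · rw [if_pos hsw]
    have hc : sᶜ.card = n - s.card := by simp [Finset.card_compl]
    rw [← hc, ← Finset.card_powersetCard (w - s.card) sᶜ]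
    refine Finset.card_bij
      (fun x _ => (Finset.univ.filter fun i => x i = true) \ s) ?_ ?_ ?_
    · intro x hx
      rw [Finset.mem_filter] at hx
      obtain ⟨-, hw, hs⟩ := hx
      rw [Finset.mem_powersetCard]
      constructor
      · intro i hi
        rw [Finset.mem_sdiff] at hi
        simpa using hi.2
      · rw [Finset.card_sdiff_of_subset hs, hw]
    · intro x₁ hx₁ x₂ hx₂ h
      rw [Finset.mem_filter] at hx₁ hx₂
      have e : (Finset.univ.filter fun i => x₁ i = true)
          = (Finset.univ.filter fun i => x₂ i = true) := by
        rw [← Finset.sdiff_union_of_subset hx₁.2.2, ← Finset.sdiff_union_of_subset hx₂.2.2]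
        exact congrArg (· ∪ s) h
      funext i
      have := Finset.ext_iff.mp e i
      simp only [Finset.mem_filter, Finset.mem_univ, true_and] at this
      cases h1 : x₁ i <;> cases h2 : x₂ i <;> simp_all
    · intro t ht
      rw [Finset.mem_powersetCard] at ht
      obtain ⟨hts, htc⟩ := ht
      have hdisj : Disjoint t s := by
        rw [Finset.disjoint_left]
        intro i hit his
        exact absurd (hts hit) (by simp [his])
      refine ⟨fun i => decide (i ∈ t ∪ s), ?_, ?_⟩
      · have hsupp : (Finset.univ.filter fun i => (decide (i ∈ t ∪ s)) = true) = t ∪ s := by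
          ext i; simp
        rw [Finset.mem_filter]
        refine ⟨Finset.mem_univ _, ?_, ?_⟩
        · rw [hsupp, Finset.card_union_of_disjoint hdisj, htc]
          omega
        · rw [hsupp]; exact Finset.subset_union_right
      · have hsupp : (Finset.univ.filter fun i => (decide (i ∈ t ∪ s)) = true) = t ∪ s := by
          ext i; simp
        show (Finset.univ.filter fun i => (decide (i ∈ t ∪ s)) = true) \ s = t
        rw [hsupp]
        ext i
        simp only [Finset.mem_sdiff, Finset.mem_union]
        constructor
        · rintro ⟨h1 | h1, h2⟩
          · exact h1
          · exact absurd h1 h2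
        · intro hit
          exact ⟨Or.inl hit, fun his => Finset.disjoint_left.mp hdisj hit his⟩
  · rw [if_neg hsw]
    rw [Finset.card_eq_zero, Finset.filter_eq_empty_iff]
    intro x _
    rintro ⟨hw, hs⟩
    exact hsw (hw ▸ Finset.card_le_card hs)

/-- The sum of a low-degree polynomial over all weight-`w` Boolean inputs is a linear
combination of binomial coefficients. -/
lemma sum_eval_eq (n : ℕ) (P : MvPolynomial (Fin n) ℝ)
    (D : ℕ) (hdeg : P.totalDegree < D) (w : ℕ) :
    ∑ x ∈ Finset.univ.filter
        (fun x : Fin n → Bool => (Finset.univ.filter fun i => x i = true).card = w),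
      MvPolynomial.eval (fun i => boolToReal (x i)) P
    = ∑ k ∈ Finset.range D,
        (∑ m ∈ P.support.filter fun m => m.support.card = k, P.coeff m) *
          (if k ≤ w then ((n - k).choose (w - k) : ℝ) else 0) := by
  classical
  have hmono : ∀ m ∈ P.support, ∀ x : Fin n → Bool,
      (∏ i ∈ m.support, boolToReal (x i) ^ m i)
        = if m.support ⊆ (Finset.univ.filter fun i => x i = true) then 1 else 0 := by
    intro m _ x
    by_cases h : m.support ⊆ (Finset.univ.filter fun i => x i = true)
    · rw [if_pos h]
      refine Finset.prod_eq_one fun i hi => ?_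
      have hx : x i = true := by simpa using h hi
      simp [boolToReal, hx]
    · rw [if_neg h]
      obtain ⟨i, him, hix⟩ := Finset.not_subset.mp h
      refine Finset.prod_eq_zero him ?_
      have hx : x i = false := by
        cases hv : x i
        · rfl
        · exact absurd (by simp [hv]) hix
      have hm : m i ≠ 0 := Finsupp.mem_support_iff.mp him
      simp [boolToReal, hx, zero_pow hm]
  rw [Finset.sum_congr rfl (fun x _ => MvPolynomial.eval_eq _ _)]
  rw [Finset.sum_comm]
  have step : ∀ m ∈ P.support,
      (∑ x ∈ Finset.univ.filter
          (fun x : Fin n → Bool => (Finset.univ.filter fun i => x i = true).card = w),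
        P.coeff m * ∏ i ∈ m.support, boolToReal (x i) ^ m i)
      = P.coeff m * (if m.support.card ≤ w then
          ((n - m.support.card).choose (w - m.support.card) : ℝ) else 0) := by
    intro m hm
    rw [← Finset.mul_sum]
    congr 1
    rw [Finset.sum_congr rfl (fun x _ => hmono m hm x)]
    rw [Finset.sum_boole, Finset.filter_filter]
    rw [count_weight_supset n w m.support]
    split_ifs <;> simp
  rw [Finset.sum_congr rfl step]
  rw [← Finset.sum_fiberwise_of_maps_to (g := fun m : (Fin n) →₀ ℕ => m.support.card)
    (t := Finset.range D) ?_ _]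
  · refine Finset.sum_congr rfl fun k _ => ?_
    rw [Finset.sum_mul]
    refine Finset.sum_congr rfl fun m hm => ?_
    rw [(Finset.mem_filter.mp hm).2]
  · intro m hm
    rw [Finset.mem_range]
    calc m.support.card ≤ m.sum fun _ e => e := by
          rw [Finsupp.sum, Finset.card_eq_sum_ones]
          exact Finset.sum_le_sum fun i hi =>
            Nat.one_le_iff_ne_zero.mpr (Finsupp.mem_support_iff.mp hi)
      _ ≤ P.totalDegree := MvPolynomial.le_totalDegree hm
      _ < D := hdeg

theorem unique_symmetrization (f : (Fin 10 → Bool) → Bool) (hdeg : bdeg f ≤ 4)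
    (h0 : f (fun _ => false) = false)
    (h1 : ∀ i : Fin 10, f (fun j => decide (j = i)) = true) :
    ∀ w : ℕ, w ≤ 10 →
      ((Finset.univ.filter fun x : Fin 10 → Bool =>
          (Finset.univ.filter fun i : Fin 10 => x i = true).card = w ∧ f x = true).card : ℝ)
        = (Nat.choose 10 w : ℝ) * qPoly (w : ℝ) := by
  classical
  obtain ⟨P, hrep, hP4⟩ : ∃ P : MvPolynomial (Fin 10) ℝ, IsRepr f P ∧ P.totalDegree ≤ 4 := by
    have hne : {d | ∃ P : MvPolynomial (Fin 10) ℝ, IsRepr f P ∧ P.totalDegree = d}.Nonempty := by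
      obtain ⟨P, hP⟩ := exists_repr f
      exact ⟨P.totalDegree, P, hP, rfl⟩
    obtain ⟨P, hPr, hPd⟩ := Nat.sInf_mem hne
    unfold bdeg at hdeg
    exact ⟨P, hPr, hPd ▸ hdeg⟩
  -- the counts expressed as linear combinations of the coefficients a k
  have hNsum : ∀ v : ℕ,
      ((Finset.univ.filter fun x : Fin 10 → Bool =>
          (Finset.univ.filter fun i : Fin 10 => x i = true).card = v ∧ f x = true).card : ℝ)
      = ∑ k ∈ Finset.range 5,
          (∑ m ∈ P.support.filter fun m => m.support.card = k, P.coeff m) *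
            (if k ≤ v then ((10 - k).choose (v - k) : ℝ) else 0) := by
    intro v
    rw [← sum_eval_eq 10 P 5 (by omega) v]
    rw [Finset.sum_congr rfl (fun x _ => hrep.2 x)]
    have hb : ∀ x : Fin 10 → Bool, boolToReal (f x) = if f x = true then (1 : ℝ) else 0 := by
      intro x; simp [boolToReal]
    rw [Finset.sum_congr rfl (fun x _ => hb x), Finset.sum_boole, Finset.filter_filter]
  -- upper bounds: at most C(10, v) inputs of weight v
  have hU : ∀ v : ℕ,
      ((Finset.univ.filter fun x : Fin 10 → Bool =>
          (Finset.univ.filter fun i : Fin 10 => x i = true).card = v ∧ f x = true).card : ℝ)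
        ≤ (Nat.choose 10 v : ℝ) := by
    intro v
    have hsub : (Finset.univ.filter fun x : Fin 10 → Bool =>
          (Finset.univ.filter fun i : Fin 10 => x i = true).card = v ∧ f x = true)
        ⊆ (Finset.univ.filter fun x : Fin 10 → Bool =>
          (Finset.univ.filter fun i : Fin 10 => x i = true).card = v ∧
            (∅ : Finset (Fin 10)) ⊆ Finset.univ.filter fun i => x i = true) := by
      intro x hx
      simp only [Finset.mem_filter] at hx ⊢
      exact ⟨hx.1, hx.2.1, Finset.empty_subset _⟩
    have hcard := Finset.card_le_card hsub
    have h2 : (Finset.univ.filter fun x : Fin 10 → Bool =>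
          (Finset.univ.filter fun i : Fin 10 => x i = true).card = v ∧
            (∅ : Finset (Fin 10)) ⊆ Finset.univ.filter fun i => x i = true).card
        = Nat.choose 10 v := by
      rw [count_weight_supset 10 v ∅]
      simp
    rw [h2] at hcard
    exact_mod_cast hcard
  -- lower bounds are trivial
  have hL : ∀ v : ℕ, (0 : ℝ) ≤
      ((Finset.univ.filter fun x : Fin 10 → Bool =>
          (Finset.univ.filter fun i : Fin 10 => x i = true).card = v ∧ f x = true).card : ℝ) :=
    fun v => Nat.cast_nonneg _
  -- weight 0: no accepted inputs
  have hN0 : ((Finset.univ.filter fun x : Fin 10 → Bool =>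
          (Finset.univ.filter fun i : Fin 10 => x i = true).card = 0 ∧ f x = true).card : ℝ)
        = 0 := by
    rw [Nat.cast_eq_zero, Finset.card_eq_zero, Finset.filter_eq_empty_iff]
    rintro x - ⟨hw, hfx⟩
    have hx : x = fun _ => false := by
      funext i
      cases hv : x i
      · rfl
      · exfalso
        have hmem : i ∈ Finset.univ.filter fun i : Fin 10 => x i = true := by simp [hv]
        rw [Finset.card_eq_zero.mp hw] at hmem
        simp at hmem
    rw [hx, h0] at hfx
    exact absurd hfx (by simp)
  -- weight 1: all 10 inputs accepted
  have hN1 : ((Finset.univ.filter fun x : Fin 10 → Bool =>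
          (Finset.univ.filter fun i : Fin 10 => x i = true).card = 1 ∧ f x = true).card : ℝ)
        = 10 := by
    have heq : (Finset.univ.filter fun x : Fin 10 → Bool =>
          (Finset.univ.filter fun i : Fin 10 => x i = true).card = 1 ∧ f x = true)
        = (Finset.univ.filter fun x : Fin 10 → Bool =>
          (Finset.univ.filter fun i : Fin 10 => x i = true).card = 1 ∧
            (∅ : Finset (Fin 10)) ⊆ Finset.univ.filter fun i => x i = true) := by
      ext x
      simp only [Finset.mem_filter, Finset.mem_univ, true_and, Finset.empty_subset, and_true]
      constructor
      · rintro ⟨hw, -⟩; exact hw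
      · intro hw
        refine ⟨hw, ?_⟩
        obtain ⟨i, hi⟩ := Finset.card_eq_one.mp hw
        have hx : x = fun j => decide (j = i) := by
          funext j
          have hmem := Finset.ext_iff.mp hi j
          simp only [Finset.mem_filter, Finset.mem_univ, true_and, Finset.mem_singleton] at hmem
          by_cases hji : j = i
          · subst hji; simp [hmem.mpr rfl]
          · simp only [hji, decide_eq_false_iff_not]
            cases hv : x j
            · simp
            · exact absurd (hmem.mp hv) hji
        rw [hx]; exact h1 i
    rw [heq, count_weight_supset 10 1 ∅]
    norm_num
  -- gather all the linear equations
  have e0 := hNsum 0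
  have e1 := hNsum 1
  have e2 := hNsum 2
  have e3 := hNsum 3
  have e4 := hNsum 4
  have e5 := hNsum 5
  have e6 := hNsum 6
  have e7 := hNsum 7
  have e8 := hNsum 8
  have e9 := hNsum 9
  have e10 := hNsum 10
  simp only [Finset.sum_range_succ, Finset.sum_range_zero, zero_add] at e0 e1 e2 e3 e4 e5 e6 e7 e8 e9 e10
  set_option maxRecDepth 100000 in
  norm_num [Nat.choose, -Finset.card_eq_zero] at e0 e1 e2 e3 e4 e5 e6 e7 e8 e9 e10
  have u2 := (hU 2).trans (by norm_num [Nat.choose] : ((Nat.choose 10 2 : ℕ) : ℝ) ≤ 45)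
  have u5 := (hU 5).trans (by norm_num [Nat.choose] : ((Nat.choose 10 5 : ℕ) : ℝ) ≤ 252)
  have u8 := (hU 8).trans (by norm_num [Nat.choose] : ((Nat.choose 10 8 : ℕ) : ℝ) ≤ 45)
  have u9 := (hU 9).trans (by norm_num [Nat.choose] : ((Nat.choose 10 9 : ℕ) : ℝ) ≤ 10)
  have u10 := (hU 10).trans (by norm_num [Nat.choose] : ((Nat.choose 10 10 : ℕ) : ℝ) ≤ 1)
  have l2 := hL 2
  have l5 := hL 5
  have l8 := hL 8
  have l9 := hL 9
  have l10 := hL 10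
  intro w hw
  interval_cases w <;>
    (simp only [qPoly]; push_cast;
     norm_num [Nat.choose, -Finset.card_eq_zero, -Nat.cast_eq_zero];
     linarith [e0, e1, e2, e3, e4, e5, e6, e7, e8, e9, e10, u2, u5, u8, u9, u10,
       l2, l5, l8, l9, l10, hN0, hN1])
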